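/- For a ring R and class Q of R-modules: every homomorphic image of an injective R-module is Q-copure Baer injective if and only if every finite sum of injective submodules of a module is Q-copure Baer injective. -/

import Mathlib

universe u

variable {R : Type u}

lemma injective_of_linearEquiv [Ring R] {A B : Type u} [AddCommGroup A] [Module R A]
    [AddCommGroup B] [Module R B] (e : A ≃ₗ[R] B) (hA : Module.Injective R A) :
    Module.Injective R B := by
  constructor
  intro X Y _ _ _ _ f hf g
  obtain ⟨h, hh⟩ := hA.out f hf (e.symm.toLinearMap ∘ₗ g)
  exact ⟨e.toLinearMap ∘ₗ h, fun x => by simp [hh x]⟩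

lemma injective_pi [Ring R] {ι : Type} (N : ι → Type u) [∀ i, AddCommGroup (N i)]
    [∀ i, Module R (N i)] (hN : ∀ i, Module.Injective R (N i)) :
    Module.Injective R (∀ i, N i) := by
  constructor
  intro X Y _ _ _ _ f hf g
  choose h hh using fun i => (hN i).out f hf ((LinearMap.proj i) ∘ₗ g)
  exact ⟨LinearMap.pi h, fun x => funext fun i => hh i x⟩

/-- A linear map `f : A → B` is `Q`-copure if every module in `Q` is injective
relative to `f`. -/
def IsCopure [Ring R] (Q : ModuleCat.{u} R → Prop) {A B : Type u}
    [AddCommGroup A] [Module R A] [AddCommGroup B] [Module R B] (f : A →ₗ[R] B) : Prop :=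
  ∀ M : ModuleCat.{u} R, Q M → ∀ g : A →ₗ[R] M, ∃ h : B →ₗ[R] M, ∀ a : A, h (f a) = g a

/-- A left ideal `I` of `R` is `Q`-copure if every module in `Q` is injective
relative to the inclusion `I → R`. -/
def CopureIdeal [Ring R] (Q : ModuleCat.{u} R → Prop) (I : Ideal R) : Prop :=
  ∀ M : ModuleCat.{u} R, Q M → ∀ g : I →ₗ[R] M, ∃ h : R →ₗ[R] M, ∀ x : I, h x = g x

/-- `N` is `Q`-copure Baer injective if every homomorphism from a `Q`-copure
left ideal of `R` into `N` extends to `R`. -/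
def CopureBaerInjective [Ring R] (Q : ModuleCat.{u} R → Prop) (N : Type*)
    [AddCommGroup N] [Module R N] : Prop :=
  ∀ I : Ideal R, CopureIdeal Q I → ∀ g : I →ₗ[R] N, ∃ h : R →ₗ[R] N, ∀ x : I, h x = g x

lemma cbi_of_linearEquiv [Ring R] (Q : ModuleCat.{u} R → Prop) {A B : Type u}
    [AddCommGroup A] [Module R A] [AddCommGroup B] [Module R B] (e : A ≃ₗ[R] B)
    (hA : CopureBaerInjective Q A) : CopureBaerInjective Q B := by
  intro I hI g
  obtain ⟨h, hh⟩ := hA I hI (e.symm.toLinearMap ∘ₗ g)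
  exact ⟨e.toLinearMap ∘ₗ h, fun x => by simp [hh x]⟩

theorem images_of_injectives_iff_finite_sums [Ring R] (Q : ModuleCat.{u} R → Prop) :
    (∀ (E N : Type u) [AddCommGroup E] [Module R E] [AddCommGroup N] [Module R N],
      Module.Injective R E → (∃ g : E →ₗ[R] N, Function.Surjective g) →
        CopureBaerInjective Q N) ↔
    (∀ (M : Type u) [AddCommGroup M] [Module R M] (ι : Type) [Fintype ι]
      (N : ι → Submodule R M), (∀ i, Module.Injective R (N i)) →
        CopureBaerInjective Q (↥(⨆ i, N i))) := by
  constructor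
  · intro h M _ _ ι _ N hN
    classical
    refine h (∀ i, N i) _ (injective_pi _ hN) ?_
    set g₀ : (∀ i, N i) →ₗ[R] M := ∑ i, (N i).subtype ∘ₗ LinearMap.proj i with hg₀
    have hmem : ∀ x, g₀ x ∈ ⨆ i, N i := by
      intro x
      rw [hg₀]
      simp only [LinearMap.sum_apply, LinearMap.coe_comp, Function.comp_apply,
        Submodule.coe_subtype, LinearMap.proj_apply]
      exact Submodule.sum_mem _ fun i _ => Submodule.mem_iSup_of_mem i (x i).2
    refine ⟨LinearMap.codRestrict _ g₀ hmem, ?_⟩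
    rintro ⟨y, hy⟩
    have : ∃ x, g₀ x = y := by
      refine Submodule.iSup_induction (motive := fun y => ∃ x, g₀ x = y) N hy ?_ ⟨0, map_zero _⟩ ?_
      · intro i y hy
        refine ⟨Pi.single i ⟨y, hy⟩, ?_⟩
        rw [hg₀]
        simp only [LinearMap.sum_apply, LinearMap.coe_comp, Function.comp_apply,
          Submodule.coe_subtype, LinearMap.proj_apply]
        rw [Finset.sum_eq_single i]
        · simp
        · intro j _ hj
          rw [Pi.single_eq_of_ne hj]; simp
        · simp
      · rintro a b ⟨x, hx⟩ ⟨x', hx'⟩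
        exact ⟨x + x', by rw [map_add, hx, hx']⟩
    obtain ⟨x, hx⟩ := this
    exact ⟨x, Subtype.ext hx⟩
  · intro h E N _ _ _ _ hE hg
    obtain ⟨g, hg⟩ := hg
    set S : Bool → Submodule R (E × N) := fun b =>
      bif b then LinearMap.range (LinearMap.prod LinearMap.id g)
      else LinearMap.range (LinearMap.inl R E N) with hS
    have hSinj : ∀ b, Module.Injective R (S b) := by
      intro b
      cases b
      · exact injective_of_linearEquiv
          (LinearEquiv.ofInjective _ LinearMap.inl_injective) hE
      · refine injective_of_linearEquiv (LinearEquiv.ofInjective _ ?_) hE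
        intro a b hab
        simpa using congrArg Prod.fst hab
    have hsup : (⨆ b, S b) = ⊤ := by
      rw [iSup_bool_eq, eq_top_iff]
      rintro ⟨e, n⟩ -
      obtain ⟨x, hx⟩ := hg n
      have h1 : ((x, n) : E × N) ∈ S true := ⟨x, by simp [hx]⟩
      have h2 : ((e - x, 0) : E × N) ∈ S false := ⟨e - x, rfl⟩
      have := Submodule.add_mem_sup h1 h2
      simpa using this
    have hcbi := h (E × N) Bool S hSinj
    rw [hsup] at hcbi
    have hcbi' : CopureBaerInjective Q (E × N) :=
      cbi_of_linearEquiv Q (Submodule.topEquiv) hcbi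
    intro I hI g'
    obtain ⟨h', hh'⟩ := hcbi' I hI (LinearMap.inr R E N ∘ₗ g')
    exact ⟨LinearMap.snd R E N ∘ₗ h', fun x => by simpa using congrArg Prod.snd (hh' x)⟩
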